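/- Let n ≥ 2 and let A, B ∈ F₂[x] of degree ≤ n−1. The dimension of the CSS code with H_X = [Circ(A,n), Circ(B,n)] and H_Z = [Circ(B,n)ᵀ, Circ(A,n)ᵀ] is k = 2n − rank(H_X) − rank(H_Z) = 2·deg(gcd(A, B, x^n − 1)). -/

import Mathlib

open Polynomial

/-- The `n × n` circulant matrix over `𝔽₂` of a polynomial `A`. -/
def Circ (n : ℕ) (A : Polynomial (ZMod 2)) : Matrix (ZMod n) (ZMod n) (ZMod 2) :=
  Matrix.of fun j k => A.coeff ((j - k).val)

namespace Stmt19Aux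

noncomputable section

lemma zmod2_eq_one {a : ZMod 2} (h : a ≠ 0) : a = 1 := by revert a h; decide

lemma monic_of_ne_zero {p : (ZMod 2)[X]} (hp : p ≠ 0) : p.Monic :=
  zmod2_eq_one (leadingCoeff_ne_zero.mpr hp)

def zmodFinEquiv (n : ℕ) [NeZero n] : Fin n ≃ ZMod n where
  toFun i := (i : ℕ)
  invFun x := ⟨x.val, ZMod.val_lt x⟩
  left_inv i := by ext; simp [ZMod.val_cast_of_lt i.isLt]
  right_inv x := ZMod.natCast_rightInverse x

variable (n : ℕ) [NeZero n]

def f : (ZMod 2)[X] := X ^ n - 1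

lemma f_monic : (f n).Monic := by
  simpa [f] using monic_X_pow_sub_C (1 : (ZMod 2)) (NeZero.ne n)

lemma f_ne_zero : f n ≠ 0 := (f_monic n).ne_zero

lemma f_natDegree : (f n).natDegree = n := by
  simpa [f] using (natDegree_X_pow_sub_C (n := n) (r := (1 : (ZMod 2))))

abbrev R := AdjoinRoot (f n)

lemma root_pow_n : (AdjoinRoot.root (f n)) ^ n = 1 := by
  have h := AdjoinRoot.mk_self (f := f n)
  have : (AdjoinRoot.mk (f n)) (X ^ n - 1) = 0 := h
  rw [map_sub, map_pow, AdjoinRoot.mk_X, map_one, sub_eq_zero] at this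
  exact this

lemma root_pow_mod (m : ℕ) :
    (AdjoinRoot.root (f n)) ^ m = (AdjoinRoot.root (f n)) ^ (m % n) := by
  conv_lhs => rw [← Nat.div_add_mod m n]
  rw [pow_add, pow_mul, root_pow_n, one_pow, one_mul]

def pb : PowerBasis (ZMod 2) (R n) := AdjoinRoot.powerBasis' (f_monic n)

lemma pb_dim : (pb n).dim = n := by
  rw [pb, AdjoinRoot.powerBasis'_dim, f_natDegree]

def bas : Module.Basis (ZMod n) (ZMod 2) (R n) :=
  (pb n).basis.reindex ((finCongr (pb_dim n)).trans (zmodFinEquiv n))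

lemma bas_apply (k : ZMod n) : bas n k = (AdjoinRoot.root (f n)) ^ (k.val) := by
  rw [bas, Module.Basis.reindex_apply, PowerBasis.coe_basis]
  have hg : (pb n).gen = AdjoinRoot.root (f n) := by rw [pb, AdjoinRoot.powerBasis'_gen]
  rw [hg]
  simp [zmodFinEquiv]

lemma mk_mul_Xpow (P : (ZMod 2)[X]) (hP : P.natDegree < n) (k : ZMod n) :
    AdjoinRoot.mk (f n) (P * X ^ k.val) =
      ∑ j : ZMod n, P.coeff ((j - k).val) • (AdjoinRoot.root (f n)) ^ (j.val) := by
  have h1 : AdjoinRoot.mk (f n) (P * X ^ k.val)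
      = (∑ i ∈ Finset.range n, P.coeff i • (AdjoinRoot.root (f n)) ^ i) *
        (AdjoinRoot.root (f n)) ^ k.val := by
    rw [map_mul, map_pow, AdjoinRoot.mk_X, ← AdjoinRoot.aeval_eq,
      aeval_eq_sum_range' hP]
  rw [h1, Finset.sum_mul]
  have h2 : ∀ i ∈ Finset.range n,
      (P.coeff i • (AdjoinRoot.root (f n)) ^ i) * (AdjoinRoot.root (f n)) ^ k.val
      = P.coeff i • (AdjoinRoot.root (f n)) ^ ((i + k.val) % n) := by
    intro i _
    rw [smul_mul_assoc, ← pow_add, ← root_pow_mod]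
  rw [Finset.sum_congr rfl h2, ← Fin.sum_univ_eq_sum_range
    (fun i => P.coeff i • (AdjoinRoot.root (f n)) ^ ((i + k.val) % n))]
  refine Fintype.sum_equiv ((zmodFinEquiv n).trans (Equiv.addRight k)) _ _ fun i => ?_
  have he : ((zmodFinEquiv n).trans (Equiv.addRight k)) i = (i : ZMod n) + k := rfl
  have hik : (((i : ZMod n) + k) - k) = (i : ZMod n) := by ring
  have hv : ((i : ℕ) : ZMod n).val = (i : ℕ) := ZMod.val_cast_of_lt i.isLt
  rw [he, hik, ZMod.val_add, hv]

def e : (R n) ≃ₗ[(ZMod 2)] (ZMod n → (ZMod 2)) := (bas n).equivFun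

lemma e_mk (P : (ZMod 2)[X]) (hP : P.natDegree < n) (k : ZMod n) :
    e n (AdjoinRoot.mk (f n) (P * X ^ k.val)) = fun j => P.coeff ((j - k).val) := by
  have : (e n).symm (fun j => P.coeff ((j - k).val)) = AdjoinRoot.mk (f n) (P * X ^ k.val) := by
    rw [e, Module.Basis.equivFun_symm_apply, mk_mul_Xpow n P hP k]
    exact Finset.sum_congr rfl fun j _ => by rw [bas_apply]
  rw [← this, LinearEquiv.apply_symm_apply]

lemma circ_conj (A : (ZMod 2)[X]) (hA : A.natDegree < n) :
    (Circ n A).mulVecLin ∘ₗ (e n).toLinearMap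
      = (e n).toLinearMap ∘ₗ (LinearMap.mulLeft (ZMod 2) (AdjoinRoot.mk (f n) A)) := by
  apply (bas n).ext
  intro k
  simp only [LinearMap.comp_apply, LinearEquiv.coe_coe, LinearMap.mulLeft_apply]
  have h1 : e n (bas n k) = Pi.single k 1 := by
    funext j
    rw [e, Module.Basis.equivFun_self]
    simp [Pi.single_apply, eq_comm]
  have h2 : AdjoinRoot.mk (f n) A * bas n k = AdjoinRoot.mk (f n) (A * X ^ k.val) := by
    rw [bas_apply, map_mul, map_pow, AdjoinRoot.mk_X]
  rw [h1, h2, e_mk n A hA k, Matrix.mulVecLin_apply, Matrix.mulVec_single]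
  funext j
  simp [Circ]

lemma circ_conj' (A : (ZMod 2)[X]) (hA : A.natDegree < n) :
    (Circ n A).mulVecLin
      = (e n).toLinearMap ∘ₗ (LinearMap.mulLeft (ZMod 2) (AdjoinRoot.mk (f n) A))
          ∘ₗ (e n).symm.toLinearMap := by
  rw [← LinearMap.comp_assoc, ← circ_conj n A hA, LinearMap.comp_assoc]
  ext v
  simp

instance : Module.Finite (ZMod 2) (R n) := Module.Finite.of_basis (bas n)

lemma finrank_R : Module.finrank (ZMod 2) (R n) = n := by
  rw [(pb n).finrank, pb_dim]

lemma range_mulLeft (a : R n) :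
    LinearMap.range (LinearMap.mulLeft (ZMod 2) a) = (Ideal.span {a}).restrictScalars (ZMod 2) := by
  ext x
  simp only [LinearMap.mem_range, LinearMap.mulLeft_apply, Submodule.restrictScalars_mem,
    Ideal.mem_span_singleton']
  exact ⟨fun ⟨y, h⟩ => ⟨y, by rw [mul_comm]; exact h⟩,
    fun ⟨y, h⟩ => ⟨y, by rw [mul_comm]; exact h⟩⟩

lemma finrank_span_mk (E : (ZMod 2)[X]) (hE : E ∣ f n) (hE0 : E ≠ 0) :
    Module.finrank (ZMod 2) ((Ideal.span {AdjoinRoot.mk (f n) E}).restrictScalars (ZMod 2))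
      = n - E.natDegree := by
  have hle : Ideal.span {f n} ≤ Ideal.span {E} :=
    Ideal.span_singleton_le_span_singleton.mpr hE
  have hmap : Ideal.span {AdjoinRoot.mk (f n) E}
      = Ideal.map (Ideal.Quotient.mkₐ (ZMod 2) (Ideal.span {f n})) (Ideal.span {E}) := by
    rw [Ideal.map_span, Set.image_singleton]
    rfl
  have equiv1 : ((R n) ⧸ (Ideal.span {AdjoinRoot.mk (f n) E}).restrictScalars (ZMod 2)) ≃ₗ[(ZMod 2)]
      ((R n) ⧸ Ideal.span {AdjoinRoot.mk (f n) E}) :=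
    Submodule.Quotient.restrictScalarsEquiv (ZMod 2) _
  have equiv2 : ((R n) ⧸ Ideal.span {AdjoinRoot.mk (f n) E}) ≃ₐ[(ZMod 2)]
      ((ZMod 2)[X] ⧸ Ideal.span {E}) := by
    have e2 := DoubleQuot.quotQuotEquivQuotOfLEₐ (ZMod 2) hle
    rw [← hmap] at e2
    exact e2
  have hfr : Module.finrank (ZMod 2) ((ZMod 2)[X] ⧸ Ideal.span {E}) = E.natDegree := by
    have h := (AdjoinRoot.powerBasis' (monic_of_ne_zero hE0)).finrank
    rwa [AdjoinRoot.powerBasis'_dim] at h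
  have hq : Module.finrank (ZMod 2)
      ((R n) ⧸ (Ideal.span {AdjoinRoot.mk (f n) E}).restrictScalars (ZMod 2)) = E.natDegree := by
    rw [(equiv1.trans equiv2.toLinearEquiv).finrank_eq, hfr]
  have hsum := Submodule.finrank_quotient_add_finrank
    ((Ideal.span {AdjoinRoot.mk (f n) E}).restrictScalars (ZMod 2))
  rw [finrank_R, hq] at hsum
  have hdeg : E.natDegree ≤ n := by
    have h := Polynomial.natDegree_le_of_dvd hE (f_ne_zero n)
    rwa [f_natDegree] at h
  omega

section ABD

variable (A B : (ZMod 2)[X])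

def D : (ZMod 2)[X] := EuclideanDomain.gcd A (EuclideanDomain.gcd B (f n))

lemma D_dvd_A : D n A B ∣ A := EuclideanDomain.gcd_dvd_left _ _

lemma D_dvd_B : D n A B ∣ B :=
  dvd_trans (EuclideanDomain.gcd_dvd_right _ _) (EuclideanDomain.gcd_dvd_left _ _)

lemma D_dvd_f : D n A B ∣ f n :=
  dvd_trans (EuclideanDomain.gcd_dvd_right _ _) (EuclideanDomain.gcd_dvd_right _ _)

lemma D_ne_zero : D n A B ≠ 0 := by
  intro h
  rw [D, EuclideanDomain.gcd_eq_zero_iff] at h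
  exact (f_ne_zero n) (EuclideanDomain.gcd_eq_zero_iff.mp h.2).2

lemma D_natDegree_le : (D n A B).natDegree ≤ n := by
  have h := Polynomial.natDegree_le_of_dvd (D_dvd_f n A B) (f_ne_zero n)
  rwa [f_natDegree] at h

lemma map_span_singleton (P : (ZMod 2)[X]) :
    Ideal.map (AdjoinRoot.mk (f n)) (Ideal.span {P}) = Ideal.span {AdjoinRoot.mk (f n) P} := by
  rw [Ideal.map_span, Set.image_singleton]

lemma span_ab :
    Ideal.span {AdjoinRoot.mk (f n) A, AdjoinRoot.mk (f n) B}
      = Ideal.span {AdjoinRoot.mk (f n) (D n A B)} := by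
  have h1 : Ideal.span ({D n A B} : Set (ZMod 2)[X])
      = Ideal.span {A, EuclideanDomain.gcd B (f n)} := EuclideanDomain.span_gcd _ _
  have h2 : Ideal.span ({EuclideanDomain.gcd B (f n)} : Set (ZMod 2)[X])
      = Ideal.span {B, f n} := EuclideanDomain.span_gcd _ _
  have hfmk : Ideal.span ({AdjoinRoot.mk (f n) (f n)} : Set (R n)) = ⊥ := by
    rw [AdjoinRoot.mk_self]
    exact Ideal.span_singleton_eq_bot.mpr rfl
  calc Ideal.span {AdjoinRoot.mk (f n) A, AdjoinRoot.mk (f n) B}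
      = Ideal.span {AdjoinRoot.mk (f n) A} ⊔ Ideal.span {AdjoinRoot.mk (f n) B} := by
        rw [Ideal.span_insert]
    _ = Ideal.span {AdjoinRoot.mk (f n) A} ⊔ (Ideal.span {AdjoinRoot.mk (f n) B}
          ⊔ Ideal.span {AdjoinRoot.mk (f n) (f n)}) := by rw [hfmk, sup_bot_eq]
    _ = Ideal.map (AdjoinRoot.mk (f n)) (Ideal.span {A} ⊔ (Ideal.span {B}
          ⊔ Ideal.span {f n})) := by
        rw [Ideal.map_sup, Ideal.map_sup, map_span_singleton, map_span_singleton,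
          map_span_singleton]
    _ = Ideal.map (AdjoinRoot.mk (f n)) (Ideal.span {D n A B}) := by
        rw [← Ideal.span_insert, ← h2, ← Ideal.span_insert, ← h1]
    _ = Ideal.span {AdjoinRoot.mk (f n) (D n A B)} := map_span_singleton n _

lemma ker_inter (D' : (ZMod 2)[X]) (hD' : f n = D n A B * D') :
    LinearMap.ker (LinearMap.mulLeft (ZMod 2) (AdjoinRoot.mk (f n) A))
      ⊓ LinearMap.ker (LinearMap.mulLeft (ZMod 2) (AdjoinRoot.mk (f n) B))
      = (Ideal.span {AdjoinRoot.mk (f n) D'}).restrictScalars (ZMod 2) := by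
  ext x
  obtain ⟨P, rfl⟩ := AdjoinRoot.mk_surjective x
  simp only [Submodule.mem_inf, LinearMap.mem_ker, LinearMap.mulLeft_apply,
    Submodule.restrictScalars_mem]
  rw [← map_mul, ← map_mul, AdjoinRoot.mk_eq_zero, AdjoinRoot.mk_eq_zero,
    Ideal.mem_span_singleton]
  constructor
  · rintro ⟨hfa, hfb⟩
    have hDP : f n ∣ D n A B * P := by
      have hG := EuclideanDomain.gcd_eq_gcd_ab B (f n)
      have hD := EuclideanDomain.gcd_eq_gcd_ab A (EuclideanDomain.gcd B (f n))
      have heq : D n A B * P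
          = (A * P) * EuclideanDomain.gcdA A (EuclideanDomain.gcd B (f n))
            + ((B * P) * (EuclideanDomain.gcdA B (f n)
                * EuclideanDomain.gcdB A (EuclideanDomain.gcd B (f n)))
            + (f n) * (EuclideanDomain.gcdB B (f n)
                * EuclideanDomain.gcdB A (EuclideanDomain.gcd B (f n)) * P)) := by
        rw [D, hD, hG]; ring
      rw [heq]
      exact dvd_add (hfa.mul_right _) (dvd_add (hfb.mul_right _) (dvd_mul_right _ _))
    have hdvd : D' ∣ P := by
      rw [hD'] at hDP
      exact (mul_dvd_mul_iff_left (D_ne_zero n A B)).mp hDP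
    obtain ⟨Q, rfl⟩ := hdvd
    exact ⟨AdjoinRoot.mk (f n) Q, by rw [map_mul]⟩
  · rintro ⟨c, hc⟩
    obtain ⟨Q, rfl⟩ := AdjoinRoot.mk_surjective c
    have hsub : f n ∣ P - D' * Q := by
      rw [← AdjoinRoot.mk_eq_zero, map_sub, map_mul, ← hc, sub_self]
    have key : ∀ C : (ZMod 2)[X], D n A B ∣ C → f n ∣ C * P := by
      rintro C ⟨C', rfl⟩
      have heq : (D n A B * C') * P
          = C' * (D n A B * (P - D' * Q)) + (D n A B * D') * (C' * Q) := by ring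
      rw [heq]
      refine dvd_add ?_ ?_
      · exact Dvd.dvd.mul_left (hsub.mul_left (D n A B)) C'
      · rw [← hD']; exact dvd_mul_right _ _
    exact ⟨key A (D_dvd_A n A B), key B (D_dvd_B n A B)⟩

end ABD

lemma range_conj (m : (R n) →ₗ[(ZMod 2)] R n) :
    LinearMap.range ((e n).toLinearMap ∘ₗ m ∘ₗ (e n).symm.toLinearMap)
      = (LinearMap.range m).map ((e n).toLinearMap) := by
  rw [LinearMap.range_comp, LinearMap.range_comp, LinearEquiv.range, Submodule.map_top]

lemma ker_conj (m : (R n) →ₗ[(ZMod 2)] R n) :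
    LinearMap.ker ((e n).toLinearMap ∘ₗ m ∘ₗ (e n).symm.toLinearMap)
      = (LinearMap.ker m).map ((e n).toLinearMap) := by
  rw [LinearMap.ker_comp, LinearEquiv.ker, Submodule.comap_bot, LinearMap.ker_comp,
    Submodule.comap_equiv_eq_map_symm, LinearEquiv.symm_symm]

lemma rs_sup (a b : R n) :
    (Ideal.span {a}).restrictScalars (ZMod 2) ⊔ (Ideal.span {b}).restrictScalars (ZMod 2)
      = (Ideal.span {a, b}).restrictScalars (ZMod 2) := by
  apply le_antisymm
  · refine sup_le ?_ ?_ <;>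
    · intro x hx
      rw [Submodule.restrictScalars_mem] at hx ⊢
      exact Ideal.span_mono (by simp) hx
  · intro x hx
    rw [Submodule.restrictScalars_mem, Ideal.mem_span_pair] at hx
    obtain ⟨c, d, rfl⟩ := hx
    exact Submodule.add_mem_sup
      (show c * a ∈ (Ideal.span {a}).restrictScalars (ZMod 2) from
        Ideal.mem_span_singleton'.mpr ⟨c, rfl⟩)
      (show d * b ∈ (Ideal.span {b}).restrictScalars (ZMod 2) from
        Ideal.mem_span_singleton'.mpr ⟨d, rfl⟩)

lemma range_fromColumns {m p q : Type*} [Fintype p] [Fintype q] [Fintype m]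
    (M : Matrix m p (ZMod 2)) (N : Matrix m q (ZMod 2)) :
    LinearMap.range (Matrix.fromCols M N).mulVecLin
      = LinearMap.range M.mulVecLin ⊔ LinearMap.range N.mulVecLin := by
  apply le_antisymm
  · rintro x ⟨v, rfl⟩
    rw [Matrix.mulVecLin_apply,
      show v = Sum.elim (v ∘ Sum.inl) (v ∘ Sum.inr) from funext fun s => by cases s <;> rfl,
      Matrix.fromCols_mulVec_sumElim]
    exact Submodule.add_mem_sup ⟨_, rfl⟩ ⟨_, rfl⟩
  · refine sup_le ?_ ?_
    · rintro x ⟨u, rfl⟩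
      exact ⟨Sum.elim u 0, by
        rw [Matrix.mulVecLin_apply, Matrix.fromCols_mulVec_sumElim]; simp⟩
    · rintro x ⟨u, rfl⟩
      exact ⟨Sum.elim 0 u, by
        rw [Matrix.mulVecLin_apply, Matrix.fromCols_mulVec_sumElim]; simp⟩

lemma ker_fromRows {m p q : Type*} [Fintype m] [Fintype p] [Fintype q]
    (M : Matrix p m (ZMod 2)) (N : Matrix q m (ZMod 2)) :
    LinearMap.ker (Matrix.fromRows M N).mulVecLin
      = LinearMap.ker M.mulVecLin ⊓ LinearMap.ker N.mulVecLin := by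
  ext v
  simp only [LinearMap.mem_ker, Submodule.mem_inf, Matrix.mulVecLin_apply,
    Matrix.fromRows_mulVec]
  constructor
  · intro h
    exact ⟨funext fun i => congrFun h (Sum.inl i), funext fun i => congrFun h (Sum.inr i)⟩
  · rintro ⟨h1, h2⟩
    funext s
    cases s with
    | inl i => exact congrFun h1 i
    | inr i => exact congrFun h2 i

section main

variable (A B : (ZMod 2)[X]) (hA : A.natDegree < n) (hB : B.natDegree < n)

lemma rank_HX (hA : A.natDegree < n) (hB : B.natDegree < n) :
    (Matrix.fromCols (Circ n A) (Circ n B)).rank = n - (D n A B).natDegree := by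
  have h0 : (Matrix.fromCols (Circ n A) (Circ n B)).rank
      = Module.finrank (ZMod 2)
          (LinearMap.range (Matrix.fromCols (Circ n A) (Circ n B)).mulVecLin) := rfl
  rw [h0, range_fromColumns, circ_conj' n A hA, circ_conj' n B hB, range_conj, range_conj,
    range_mulLeft, range_mulLeft, ← Submodule.map_sup, rs_sup, span_ab n A B,
    LinearEquiv.finrank_map_eq, finrank_span_mk n _ (D_dvd_f n A B) (D_ne_zero n A B)]

lemma rank_fromRows_BA (hA : A.natDegree < n) (hB : B.natDegree < n) :
    (Matrix.fromRows (Circ n B) (Circ n A)).rank = n - (D n A B).natDegree := by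
  obtain ⟨D', hD'⟩ := D_dvd_f n A B
  have hD'0 : D' ≠ 0 := by
    intro h
    exact f_ne_zero n (by rw [hD', h, mul_zero])
  have hdegs : (D n A B).natDegree + D'.natDegree = n := by
    have h := Polynomial.natDegree_mul (D_ne_zero n A B) hD'0
    rw [← hD', f_natDegree] at h
    omega
  have hker : LinearMap.ker (Matrix.fromRows (Circ n B) (Circ n A)).mulVecLin
      = ((Ideal.span {AdjoinRoot.mk (f n) D'}).restrictScalars (ZMod 2)).map ((e n).toLinearMap) := by
    rw [ker_fromRows, circ_conj' n B hB, circ_conj' n A hA, ker_conj, ker_conj,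
      ← Submodule.map_inf ((e n).toLinearMap) (e n).injective, inf_comm,
      ker_inter n A B D' hD']
  have hrn := LinearMap.finrank_range_add_finrank_ker
    (Matrix.fromRows (Circ n B) (Circ n A)).mulVecLin
  have hdom : Module.finrank (ZMod 2) (ZMod n → (ZMod 2)) = n := by
    rw [Module.finrank_pi, ZMod.card]
  have hkerrank : Module.finrank (ZMod 2)
      (LinearMap.ker (Matrix.fromRows (Circ n B) (Circ n A)).mulVecLin)
      = (D n A B).natDegree := by
    rw [hker, LinearEquiv.finrank_map_eq,
      finrank_span_mk n D' (Dvd.intro_left _ hD'.symm) hD'0]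
    omega
  have h0 : (Matrix.fromRows (Circ n B) (Circ n A)).rank
      = Module.finrank (ZMod 2)
          (LinearMap.range (Matrix.fromRows (Circ n B) (Circ n A)).mulVecLin) := rfl
  rw [h0] at *
  omega

end main

end

end Stmt19Aux

/-- the dimension of the CSS code with `H_X = [Circ(A), Circ(B)]` and
`H_Z = [Circ(B)ᵀ, Circ(A)ᵀ]` is
`k = 2n − rank H_X − rank H_Z = 2·deg gcd(A, B, xⁿ − 1)`. -/
theorem stmt_19 (n : ℕ) [NeZero n] (hn : 2 ≤ n) (A B : Polynomial (ZMod 2))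
    (hA : A.natDegree ≤ n - 1) (hB : B.natDegree ≤ n - 1) :
    2 * n - (Matrix.fromCols (Circ n A) (Circ n B)).rank
        - (Matrix.fromCols (Circ n B).transpose (Circ n A).transpose).rank =
      2 * (EuclideanDomain.gcd A (EuclideanDomain.gcd B (X ^ n - 1))).natDegree := by
  have hA' : A.natDegree < n := lt_of_le_of_lt hA (by omega)
  have hB' : B.natDegree < n := lt_of_le_of_lt hB (by omega)
  have h1 := Stmt19Aux.rank_HX n A B hA' hB'
  have h2 : (Matrix.fromCols (Circ n B).transpose (Circ n A).transpose).rank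
      = n - (Stmt19Aux.D n A B).natDegree := by
    rw [← Matrix.transpose_fromRows, Matrix.rank_transpose]
    exact Stmt19Aux.rank_fromRows_BA n A B hA' hB'
  have h3 : EuclideanDomain.gcd A (EuclideanDomain.gcd B (X ^ n - 1)) = Stmt19Aux.D n A B := rfl
  have h4 := Stmt19Aux.D_natDegree_le n A B
  rw [h1, h2, h3]
  omega
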